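/- For every integrable real-valued measurable function h of (V, L), E[((1 − R)/(1 − π(V))) · h(V, L) | σ(V)] = E[h(V, L) | σ(V)] P-a.s., and consequently E[((1 − R)/(1 − π(V))) · h(V, L)] = E[h(V, L)]. -/

import Mathlib

open MeasureTheory ProbabilityTheory
open scoped ENNReal NNReal

/-- For every integrable real-valued measurable function `h` of `(V, L)`,
`E[((1 − R)/(1 − π(V))) ⬝ h(V, L) | σ(V)] = E[h(V, L) | σ(V)]` almost surely, and
consequently `E[((1 − R)/(1 − π(V))) ⬝ h(V, L)] = E[h(V, L)]`. -/
theorem ipw_conditional_unbiasedness_source_B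
    {Ω : Type*} {mΩ : MeasurableSpace Ω} [StandardBorelSpace Ω] [Nonempty Ω]
    {P : Measure Ω} [IsProbabilityMeasure P]
    {𝒱 𝓛 𝒴 : Type*} [m𝒱 : MeasurableSpace 𝒱] [m𝓛 : MeasurableSpace 𝓛]
    [m𝒴 : MeasurableSpace 𝒴]
    (V : Ω → 𝒱) (L : Ω → 𝓛) (Y : Ω → 𝒴)
    (hV : Measurable V) (hL : Measurable L) (hY : Measurable Y)
    (R : Ω → ℝ) (hR : Measurable R) (hR01 : ∀ ω, R ω = 0 ∨ R ω = 1)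
    (π : 𝒱 → ℝ) (hπ : Measurable π)
    -- `π(V)` is a version of `E[R | σ(V)]`
    (hπV : P[R | MeasurableSpace.comap V m𝒱] =ᵐ[P] fun ω => π (V ω))
    -- positivity
    (δ : ℝ) (hδ0 : 0 < δ) (hδhalf : δ < 1 / 2)
    (hpos : ∀ᵐ ω ∂P, δ ≤ π (V ω) ∧ π (V ω) ≤ 1 - δ)
    -- ignorability: `R ⟂ (Y, L) | σ(V)`
    (hign : CondIndepFun (MeasurableSpace.comap V m𝒱) (hV.comap_le) R
      (fun ω => (Y ω, L ω)) P)
    (h : 𝒱 × 𝓛 → ℝ) (hh : Measurable h)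
    (hhint : Integrable (fun ω => h (V ω, L ω)) P) :
    (P[fun ω => ((1 - R ω) / (1 - π (V ω))) * h (V ω, L ω) | MeasurableSpace.comap V m𝒱]
        =ᵐ[P] P[fun ω => h (V ω, L ω) | MeasurableSpace.comap V m𝒱]) ∧
      ∫ ω, ((1 - R ω) / (1 - π (V ω))) * h (V ω, L ω) ∂P = ∫ ω, h (V ω, L ω) ∂P := by
  classical
  have hmV : MeasurableSpace.comap V m𝒱 ≤ mΩ := hV.comap_le
  have hR0 : ∀ ω, 0 ≤ R ω := fun ω => by rcases hR01 ω with h' | h' <;> rw [h'] <;> norm_num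
  have hR1 : ∀ ω, R ω ≤ 1 := fun ω => by rcases hR01 ω with h' | h' <;> rw [h'] <;> norm_num
  have hVmV : Measurable[MeasurableSpace.comap V m𝒱] V := measurable_iff_comap_le.mpr le_rfl
  have hπVmeas : StronglyMeasurable[MeasurableSpace.comap V m𝒱] (fun ω => π (V ω)) :=
    (hπ.comp hVmV).stronglyMeasurable
  have hπVmeasΩ : Measurable (fun ω => π (V ω)) := hπ.comp hV
  have Rint : Integrable R P := by
    refine Integrable.mono' (integrable_const 1) hR.aestronglyMeasurable (ae_of_all _ fun ω => ?_)
    rw [Real.norm_eq_abs, abs_of_nonneg (hR0 ω)]; exact hR1 ω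
  -- key rectangle identity
  have key : ∀ B C, MeasurableSet B → MeasurableSet C →
      ∫ ω in V ⁻¹' B ∩ L ⁻¹' C, R ω ∂P = ∫ ω in V ⁻¹' B ∩ L ⁻¹' C, π (V ω) ∂P := by
    intro B C hB hC
    set S : Set Ω := R ⁻¹' {1} with hSdef
    have hS : MeasurableSet S := hR (measurableSet_singleton 1)
    have hRind : R = S.indicator (fun _ => (1 : ℝ)) := by
      funext ω
      rcases hR01 ω with h' | h'
      · rw [Set.indicator_apply, if_neg, h']
        simp only [hSdef, Set.mem_preimage, Set.mem_singleton_iff, h']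
        norm_num
      · rw [Set.indicator_apply, if_pos, h']
        simp [hSdef, h']
    set T : Set Ω := L ⁻¹' C with hTdef
    have hT : MeasurableSet T := hL hC
    have hpre : (fun ω => (Y ω, L ω)) ⁻¹' ((Set.univ : Set 𝒴) ×ˢ C) = T := by
      ext ω; simp [hTdef]
    have hci := (condIndepFun_iff_condExp_inter_preimage_eq_mul (μ := P)
      (hm' := hmV) hR (hY.prodMk hL)).mp hign {1} ((Set.univ : Set 𝒴) ×ˢ C)
      (measurableSet_singleton 1) (MeasurableSet.univ.prod hC)
    rw [hpre] at hci
    have hScond : P⟦S | MeasurableSpace.comap V m𝒱⟧ =ᵐ[P] fun ω => π (V ω) := by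
      have heq : (S.indicator (fun _ => (1 : ℝ))) = R := hRind.symm
      rw [heq]; exact hπV
    have hA : MeasurableSet[MeasurableSpace.comap V m𝒱] (V ⁻¹' B) := ⟨B, hB, rfl⟩
    have hAΩ : MeasurableSet (V ⁻¹' B) := hV hB
    have hindint : Integrable ((S ∩ T).indicator (fun _ => (1 : ℝ))) P :=
      (integrable_const (1 : ℝ)).indicator (hS.inter hT)
    have hTint : Integrable (T.indicator (fun _ => (1 : ℝ))) P :=
      (integrable_const (1 : ℝ)).indicator hT
    have hπTint : Integrable ((fun ω => π (V ω)) * T.indicator (fun _ => (1 : ℝ))) P := by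
      refine Integrable.bdd_mul (c := 1) hTint hπVmeasΩ.aestronglyMeasurable ?_
      filter_upwards [hpos] with ω hω
      rw [Real.norm_eq_abs, abs_of_nonneg (le_trans hδ0.le hω.1)]; linarith [hω.2]
    have hmul := condExp_mul_of_stronglyMeasurable_left (μ := P) hπVmeas
      (g := T.indicator (fun _ => (1 : ℝ))) hπTint hTint
    have step1 : ∫ ω in V ⁻¹' B ∩ T, R ω ∂P
        = ∫ ω in V ⁻¹' B, (S ∩ T).indicator (fun _ => (1 : ℝ)) ω ∂P := by
      rw [← setIntegral_indicator hT]
      refine setIntegral_congr_ae hAΩ (ae_of_all _ fun ω _ => ?_)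
      by_cases hωT : ω ∈ T
      · by_cases hωS : ω ∈ S
        · rw [Set.indicator_of_mem hωT, Set.indicator_of_mem (Set.mem_inter hωS hωT)]
          simpa [hSdef] using hωS
        · rw [Set.indicator_of_mem hωT, Set.indicator_of_notMem (fun hc => hωS hc.1)]
          rcases hR01 ω with h' | h'
          · exact h'
          · exact absurd (by simp [hSdef, h'] : ω ∈ S) hωS
      · rw [Set.indicator_of_notMem hωT, Set.indicator_of_notMem (fun hc => hωT hc.2)]
    have step2 : ∫ ω in V ⁻¹' B, (S ∩ T).indicator (fun _ => (1 : ℝ)) ω ∂P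
        = ∫ ω in V ⁻¹' B, (P⟦S ∩ T | MeasurableSpace.comap V m𝒱⟧) ω ∂P :=
      (setIntegral_condExp hmV hindint hA).symm
    have step3 : ∫ ω in V ⁻¹' B, (P⟦S ∩ T | MeasurableSpace.comap V m𝒱⟧) ω ∂P
        = ∫ ω in V ⁻¹' B,
            (P[(fun ω => π (V ω)) * T.indicator (fun _ => (1 : ℝ)) |
              MeasurableSpace.comap V m𝒱]) ω ∂P := by
      refine setIntegral_congr_ae hAΩ ?_
      filter_upwards [hci, hScond, hmul] with ω h1 h2 h3 _
      rw [h1, h2, h3]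
      simp [Pi.mul_apply]
    have step4 : ∫ ω in V ⁻¹' B,
          (P[(fun ω => π (V ω)) * T.indicator (fun _ => (1 : ℝ)) |
            MeasurableSpace.comap V m𝒱]) ω ∂P
        = ∫ ω in V ⁻¹' B ∩ T, π (V ω) ∂P := by
      rw [setIntegral_condExp hmV hπTint hA, ← setIntegral_indicator hT]
      refine setIntegral_congr_ae hAΩ (ae_of_all _ fun ω _ => ?_)
      by_cases hωT : ω ∈ T
      · rw [Pi.mul_apply, Set.indicator_of_mem hωT, Set.indicator_of_mem hωT]; ring
      · rw [Pi.mul_apply, Set.indicator_of_notMem hωT, Set.indicator_of_notMem hωT]; ring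
    rw [step1, step2, step3, step4]
  -- two measures on 𝒱 × 𝓛
  set μ₁ : Measure (𝒱 × 𝓛) :=
    (P.withDensity fun ω => ENNReal.ofReal (R ω)).map (fun ω => (V ω, L ω)) with hμ₁
  set μ₂ : Measure (𝒱 × 𝓛) :=
    (P.withDensity fun ω => ENNReal.ofReal (π (V ω))).map (fun ω => (V ω, L ω)) with hμ₂
  have hVL : Measurable (fun ω => (V ω, L ω)) := hV.prodMk hL
  have hπint : Integrable (fun ω => π (V ω)) P := by
    refine Integrable.mono' (integrable_const 1) hπVmeasΩ.aestronglyMeasurable ?_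
    filter_upwards [hpos] with ω hω
    rw [Real.norm_eq_abs, abs_of_nonneg (le_trans hδ0.le hω.1)]; linarith [hω.2]
  have hπnn : 0 ≤ᵐ[P] fun ω => π (V ω) := by
    filter_upwards [hpos] with ω hω; exact le_trans hδ0.le hω.1
  have happly : ∀ (d : Ω → ℝ), Measurable d → Integrable d P →
      0 ≤ᵐ[P] d → ∀ (s : Set (𝒱 × 𝓛)), MeasurableSet s →
      ((P.withDensity (fun ω => ENNReal.ofReal (d ω))).map (fun ω => (V ω, L ω))) s
        = ENNReal.ofReal (∫ ω in (fun ω => (V ω, L ω)) ⁻¹' s, d ω ∂P) := by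
    intro d hd hdint hdnn s hs
    rw [Measure.map_apply hVL hs, withDensity_apply _ (hVL hs)]
    exact (ofReal_integral_eq_lintegral_ofReal hdint.restrict (ae_restrict_of_ae hdnn)).symm
  have hμeq : μ₁ = μ₂ := by
    have huniv : μ₁ Set.univ = μ₂ Set.univ := by
      rw [hμ₁, hμ₂, happly R hR Rint (ae_of_all _ hR0) _ MeasurableSet.univ,
        happly _ hπVmeasΩ hπint hπnn _ MeasurableSet.univ]
      congr 1
      rw [Set.preimage_univ, setIntegral_univ, setIntegral_univ,
        ← integral_condExp hmV (f := R)]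
      exact integral_congr_ae hπV
    have : IsFiniteMeasure μ₁ := by
      constructor
      rw [huniv, hμ₂, happly _ hπVmeasΩ hπint hπnn _ MeasurableSet.univ]
      exact ENNReal.ofReal_lt_top
    refine ext_of_generate_finite _ generateFrom_prod.symm isPiSystem_prod ?_ huniv
    rintro s ⟨B, hB, C, hC, rfl⟩
    simp only [Set.mem_setOf_eq] at hB hC
    rw [hμ₁, hμ₂, happly R hR Rint (ae_of_all _ hR0) _ (hB.prod hC),
      happly _ hπVmeasΩ hπint hπnn _ (hB.prod hC)]
    congr 1
    rw [Set.mk_preimage_prod]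
    exact key B C hB hC
  -- Claim B
  have claimB : ∀ g : 𝒱 × 𝓛 → ℝ, Measurable g →
      ∫ ω, R ω * g (V ω, L ω) ∂P = ∫ ω, π (V ω) * g (V ω, L ω) ∂P := by
    intro g hg
    have e₁ : ∫ p, g p ∂μ₁ = ∫ ω, R ω * g (V ω, L ω) ∂P := by
      rw [hμ₁, integral_map hVL.aemeasurable hg.aestronglyMeasurable]
      have heq : (P.withDensity fun ω => ENNReal.ofReal (R ω))
          = P.withDensity (fun ω => ((fun ω => Real.toNNReal (R ω)) ω : ℝ≥0∞)) := rfl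
      rw [heq, integral_withDensity_eq_integral_smul hR.real_toNNReal]
      refine integral_congr_ae (ae_of_all _ fun ω => ?_)
      simp [NNReal.smul_def, Real.coe_toNNReal _ (hR0 ω)]
    have e₂ : ∫ p, g p ∂μ₂ = ∫ ω, π (V ω) * g (V ω, L ω) ∂P := by
      rw [hμ₂, integral_map hVL.aemeasurable hg.aestronglyMeasurable]
      have heq : (P.withDensity fun ω => ENNReal.ofReal (π (V ω)))
          = P.withDensity (fun ω => ((fun ω => Real.toNNReal (π (V ω))) ω : ℝ≥0∞)) := rfl
      rw [heq, integral_withDensity_eq_integral_smul hπVmeasΩ.real_toNNReal]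
      refine integral_congr_ae ?_
      filter_upwards [hpos] with ω hω
      simp [NNReal.smul_def, Real.coe_toNNReal _ (le_trans hδ0.le hω.1)]
    rw [← e₁, ← e₂, hμeq]
  -- auxiliary function k
  set k : 𝒱 × 𝓛 → ℝ := fun p => h p / (1 - π p.1) with hkdef
  have hk : Measurable k := hh.div (measurable_const.sub (hπ.comp measurable_fst))
  have hkbound : ∀ᵐ ω ∂P, ‖k (V ω, L ω)‖ ≤ δ⁻¹ * ‖h (V ω, L ω)‖ := by
    filter_upwards [hpos] with ω hω
    have hδle : δ ≤ 1 - π (V ω) := by linarith [hω.2]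
    rw [hkdef]
    simp only [norm_div, Real.norm_eq_abs]
    rw [abs_of_nonneg (by linarith : (0:ℝ) ≤ 1 - π (V ω)), ← div_eq_inv_mul]
    gcongr
    
  have hkint : Integrable (fun ω => k (V ω, L ω)) P :=
    Integrable.mono' (hhint.norm.const_mul δ⁻¹) ((hk.comp hVL).aestronglyMeasurable) hkbound
  -- set-integral identity (†)
  have dagger : ∀ B : Set 𝒱, MeasurableSet B →
      ∫ ω in V ⁻¹' B, R ω * k (V ω, L ω) ∂P = ∫ ω in V ⁻¹' B, π (V ω) * k (V ω, L ω) ∂P := by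
    intro B hB
    set g : 𝒱 × 𝓛 → ℝ := (B ×ˢ (Set.univ : Set 𝓛)).indicator k with hgdef
    have hg : Measurable g := hk.indicator (hB.prod MeasurableSet.univ)
    have gcomp : ∀ ω, g (V ω, L ω)
        = (V ⁻¹' B).indicator (fun ω => k (V ω, L ω)) ω := by
      intro ω
      by_cases hω : V ω ∈ B
      · simp [hgdef, Set.indicator_apply, hω]
      · simp [hgdef, Set.indicator_apply, hω]
    have htrans : ∀ c : Ω → ℝ, ∫ ω, c ω * g (V ω, L ω) ∂P
        = ∫ ω in V ⁻¹' B, c ω * k (V ω, L ω) ∂P := by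
      intro c
      rw [← integral_indicator (hV hB)]
      refine integral_congr_ae (ae_of_all _ fun ω => ?_)
      show c ω * g (V ω, L ω) = (V ⁻¹' B).indicator (fun ω => c ω * k (V ω, L ω)) ω
      rw [gcomp ω]
      by_cases hω : ω ∈ V ⁻¹' B
      · rw [Set.indicator_of_mem hω, Set.indicator_of_mem hω]
      · rw [Set.indicator_of_notMem hω, Set.indicator_of_notMem hω, mul_zero]
    rw [← htrans R, ← htrans (fun ω => π (V ω))]
    exact claimB g hg
  -- main set-integral identity
  have main : ∀ B : Set 𝒱, MeasurableSet B →
      ∫ ω in V ⁻¹' B, ((1 - R ω) / (1 - π (V ω))) * h (V ω, L ω) ∂P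
        = ∫ ω in V ⁻¹' B, h (V ω, L ω) ∂P := by
    intro B hB
    have hRkint : Integrable (fun ω => R ω * k (V ω, L ω)) P :=
      Integrable.bdd_mul (c := 1) hkint hR.aestronglyMeasurable
        (ae_of_all _ fun ω => by rw [Real.norm_eq_abs, abs_of_nonneg (hR0 ω)]; exact hR1 ω)
    have hπkint : Integrable (fun ω => π (V ω) * k (V ω, L ω)) P := by
      refine Integrable.bdd_mul (c := 1) hkint hπVmeasΩ.aestronglyMeasurable ?_
      filter_upwards [hpos] with ω hω
      rw [Real.norm_eq_abs, abs_of_nonneg (le_trans hδ0.le hω.1)]; linarith [hω.2]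
    have split : ∫ ω in V ⁻¹' B, ((1 - R ω) / (1 - π (V ω))) * h (V ω, L ω) ∂P
        = ∫ ω in V ⁻¹' B,
            (h (V ω, L ω) + (π (V ω) * k (V ω, L ω) - R ω * k (V ω, L ω))) ∂P := by
      refine setIntegral_congr_ae (hV hB) ?_
      filter_upwards [hpos] with ω hω _
      have hne : (1 : ℝ) - π (V ω) ≠ 0 := by
        have := hω.2; intro hc; nlinarith
      rw [hkdef]
      field_simp
      ring
    have hdiff : Integrable
        (fun ω => π (V ω) * k (V ω, L ω) - R ω * k (V ω, L ω)) P := hπkint.sub hRkint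
    rw [split, integral_add (hhint.restrict) (hdiff.restrict),
      integral_sub (hπkint.restrict) (hRkint.restrict), dagger B hB]
    ring
  have hWint : Integrable (fun ω => ((1 - R ω) / (1 - π (V ω))) * h (V ω, L ω)) P := by
    refine Integrable.mono' (hhint.norm.const_mul δ⁻¹) ?_ ?_
    · exact (((measurable_const.sub hR).div
        (measurable_const.sub hπVmeasΩ)).mul (hh.comp hVL)).aestronglyMeasurable
    · filter_upwards [hpos] with ω hω
      have hnum : |1 - R ω| ≤ 1 := by
        rcases hR01 ω with h' | h' <;> rw [h'] <;> norm_num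
      have hden : δ ≤ 1 - π (V ω) := by linarith [hω.2]
      rw [Real.norm_eq_abs, abs_mul, abs_div]
      rw [abs_of_nonneg (by linarith : (0:ℝ) ≤ 1 - π (V ω))]
      calc |1 - R ω| / (1 - π (V ω)) * |h (V ω, L ω)|
          ≤ 1 / δ * |h (V ω, L ω)| :=
            mul_le_mul_of_nonneg_right (div_le_div₀ zero_le_one hnum hδ0 hden) (abs_nonneg _)
        _ = δ⁻¹ * ‖h (V ω, L ω)‖ := by rw [one_div, Real.norm_eq_abs]
  constructor
  · refine (ae_eq_condExp_of_forall_setIntegral_eq hmV hWint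
      (fun s _ _ => integrable_condExp.integrableOn) (fun s hs _ => ?_)
      (stronglyMeasurable_condExp.aestronglyMeasurable)).symm
    obtain ⟨B, hB, rfl⟩ := hs
    rw [setIntegral_condExp hmV hhint ⟨B, hB, rfl⟩]
    exact (main B hB).symm
  · have hfin := main Set.univ MeasurableSet.univ
    rw [Set.preimage_univ, setIntegral_univ, setIntegral_univ] at hfin
    exact hfin
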